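/- (Theorem 1, Part B (i)) Suppose Δ > 0, every fixed point of ψ̃_Δ is a strict crossing of the diagonal, and, in case βlo is a fixed point, ψ̃_Δ crosses strictly from above at βlo. Then the set of fixed points of ψ̃_Δ in [βlo, βhi] is nonempty and finite and has odd cardinality 2k+1 for some k ≥ 0, and when its elements are listed in decreasing order β̂₁ > β̂₂ > ⋯ > β̂_{2k+1}, ψ̃_Δ crosses the diagonal strictly from above at β̂_j for every odd j and strictly from below at β̂_j for every even j; in particular the largest Berk–Nash equilibrium belief is stable. -/

import Mathlib

open Set

/-- `F` crosses the diagonal strictly from above at `x` (within the interval `[a,b]`). -/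
def CrossesFromAbove (F : ℝ → ℝ) (a b x : ℝ) : Prop :=
  ∃ ε > 0, (∀ t ∈ Ioo (x - ε) x ∩ Icc a b, t < F t) ∧
    (∀ t ∈ Ioo x (x + ε) ∩ Icc a b, F t < t)

/-- `F` crosses the diagonal strictly from below at `x` (within the interval `[a,b]`). -/
def CrossesFromBelow (F : ℝ → ℝ) (a b x : ℝ) : Prop :=
  ∃ ε > 0, (∀ t ∈ Ioo (x - ε) x ∩ Icc a b, F t < t) ∧
    (∀ t ∈ Ioo x (x + ε) ∩ Icc a b, t < F t)

/-- the objective function -/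
def Phi (R : ℝ → ℝ → ℝ) (H : ℝ → ℝ) (Δ βstar : ℝ) : ℝ × ℝ → ℝ :=
  fun p => |Δ + R (H p.1) p.2 - R (H p.1) βstar|

/-- the fixed point set -/
def fixSet (ψ : ℝ → ℝ) (a b : ℝ) : Set ℝ := {β : ℝ | β ∈ Icc a b ∧ ψ β = β}

private lemma sign_ext_aux {g : ℝ → ℝ} {x y : ℝ} (hxy : x ≤ y)
    (hc : ContinuousOn g (Icc x y)) (hne : ∀ z ∈ Icc x y, g z ≠ 0) :
    (0 < g x ↔ 0 < g y) := by
  constructor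
  · intro hx
    by_contra hy
    have hy' : g y < 0 := lt_of_le_of_ne (not_lt.mp hy) (hne y (right_mem_Icc.mpr hxy))
    obtain ⟨z, hz, hz0⟩ := intermediate_value_Ioo' hxy hc
      (show (0:ℝ) ∈ Ioo (g y) (g x) from ⟨hy', hx⟩)
    exact hne z (Ioo_subset_Icc_self hz) hz0
  · intro hy
    by_contra hx
    have hx' : g x < 0 := lt_of_le_of_ne (not_lt.mp hx) (hne x (left_mem_Icc.mpr hxy))
    obtain ⟨z, hz, hz0⟩ := intermediate_value_Ioo hxy hc
      (show (0:ℝ) ∈ Ioo (g x) (g y) from ⟨hx', hy⟩)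
    exact hne z (Ioo_subset_Icc_self hz) hz0

lemma psi_sign_ext {ψ : ℝ → ℝ} {x y : ℝ} (hxy : x ≤ y)
    (hc : ContinuousOn (fun t => ψ t - t) (Icc x y))
    (hne : ∀ z, x ≤ z → z ≤ y → ψ z ≠ z) :
    (x < ψ x ↔ y < ψ y) ∧ (ψ x < x ↔ ψ y < y) := by
  have h := sign_ext_aux hxy hc (fun z hz => sub_ne_zero.mpr (hne z hz.1 hz.2))
  simp only [sub_pos] at h
  refine ⟨h, ?_⟩
  have hx := hne x le_rfl hxy
  have hy := hne y hxy le_rfl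
  constructor
  · intro h1
    rcases lt_or_gt_of_ne hy with h2 | h2
    · exact h2
    · exact absurd (h.mpr h2) (by linarith)
  · intro h1
    rcases lt_or_gt_of_ne hx with h2 | h2
    · exact h2
    · exact absurd (h.mp h2) (by linarith)

lemma argmin_continuousOn {Φ : ℝ × ℝ → ℝ} {a b : ℝ}
    (hΦc : ContinuousOn Φ (Icc a b ×ˢ Icc a b)) {ψ : ℝ → ℝ}
    (hψK : ∀ β ∈ Icc a b, ψ β ∈ Icc a b)
    (hmin : ∀ β ∈ Icc a b, ∀ x ∈ Icc a b, x ≠ ψ β → Φ (β, ψ β) < Φ (β, x)) :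
    ContinuousOn ψ (Icc a b) := by
  have hIc : IsCompact (Icc a b) := isCompact_Icc
  have hu := (hIc.prod hIc).uniformContinuousOn_of_continuous hΦc
  rw [Metric.uniformContinuousOn_iff] at hu
  rw [Metric.continuousOn_iff]
  intro b0 hb0 ε hε
  by_cases hC : (Icc a b \ Metric.ball (ψ b0) ε).Nonempty
  · have hCc : IsCompact (Icc a b \ Metric.ball (ψ b0) ε) := hIc.diff Metric.isOpen_ball
    have hΦbc : ContinuousOn (fun x => Φ (b0, x)) (Icc a b \ Metric.ball (ψ b0) ε) := by
      apply hΦc.comp ((continuous_const.prodMk continuous_id).continuousOn)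
      intro x hx
      exact ⟨hb0, hx.1⟩
    obtain ⟨x₀, hx₀, hminx₀⟩ := hCc.exists_isMinOn hC hΦbc
    have hx₀ne : x₀ ≠ ψ b0 := fun h => hx₀.2 (h ▸ Metric.mem_ball_self hε)
    have hm : Φ (b0, ψ b0) < Φ (b0, x₀) := hmin b0 hb0 x₀ hx₀.1 hx₀ne
    obtain ⟨δ, hδ, hδp⟩ := hu ((Φ (b0, x₀) - Φ (b0, ψ b0)) / 2) (by linarith)
    refine ⟨δ, hδ, fun a0 ha0 hab => ?_⟩
    by_contra hfar
    push_neg at hfar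
    have hψaC : ψ a0 ∈ Icc a b \ Metric.ball (ψ b0) ε :=
      ⟨hψK a0 ha0, fun h => absurd (Metric.mem_ball.mp h) (not_lt.mpr hfar)⟩
    have h1 : Φ (b0, x₀) ≤ Φ (b0, ψ a0) := hminx₀ hψaC
    have hdmax : ∀ y : ℝ, dist ((a0, y) : ℝ × ℝ) ((b0, y) : ℝ × ℝ) < δ := by
      intro y
      rw [Prod.dist_eq]
      simp only [dist_self]
      exact max_lt hab hδ
    have h2 := hδp (a0, ψ a0) ⟨ha0, hψK a0 ha0⟩ (b0, ψ a0) ⟨hb0, hψK a0 ha0⟩ (hdmax (ψ a0))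
    have h3 := hδp (a0, ψ b0) ⟨ha0, hψK b0 hb0⟩ (b0, ψ b0) ⟨hb0, hψK b0 hb0⟩ (hdmax (ψ b0))
    rw [Real.dist_eq] at h2 h3
    have h2' := abs_lt.mp h2
    have h3' := abs_lt.mp h3
    have h4 : Φ (a0, ψ a0) ≤ Φ (a0, ψ b0) := by
      rcases eq_or_ne (ψ b0) (ψ a0) with h | h
      · rw [h]
      · exact (hmin a0 ha0 (ψ b0) (hψK b0 hb0) h).le
    obtain ⟨h2a, h2b⟩ := h2'
    obtain ⟨h3a, h3b⟩ := h3'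
    linarith
  · refine ⟨1, one_pos, fun a0 ha0 _ => ?_⟩
    by_contra h
    exact hC ⟨ψ a0, hψK a0 ha0, fun hb => h (Metric.mem_ball.mp hb)⟩

theorem stmt_4
    (βlo βstar βhi : ℝ)
    (hlo : 0 < βlo) (hls : βlo < βstar) (hsh : βstar < βhi)
    (R : ℝ → ℝ → ℝ)
    (hRcont : ContinuousOn (fun p : ℝ × ℝ => R p.1 p.2) (Icc (0:ℝ) 1 ×ˢ Ici (0:ℝ)))
    (hR0 : ∀ h ∈ Icc (0:ℝ) 1, R h 0 = 0)
    (hR0' : ∀ β ∈ Ici (0:ℝ), R 0 β = 0)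
    (hRβ : ∀ h ∈ Ioc (0:ℝ) 1, StrictMonoOn (fun β => R h β) (Ici 0))
    (hRh : ∀ β > (0:ℝ), StrictMonoOn (fun h => R h β) (Icc 0 1))
    (hRid : ∀ h₁ h₂ β₁ β₂ : ℝ, 0 ≤ h₁ → h₁ < h₂ → h₂ ≤ 1 → 0 ≤ β₁ → β₁ < β₂ →
      R h₂ β₁ - R h₁ β₁ < R h₂ β₂ - R h₁ β₂)
    (H : ℝ → ℝ)
    (hHcont : ContinuousOn H (Ici 0))
    (hHmono : StrictMonoOn H (Ici 0))
    (hH0 : H 0 = 0)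
    (hHin : ∀ β > (0:ℝ), H β ∈ Ioo (0:ℝ) 1)
    (Δ : ℝ) (hΔ : 0 < Δ)
    (ψ : ℝ → ℝ)
    (hψ : ∀ β ∈ Icc βlo βhi,
      ψ β ∈ Icc βlo βhi ∧
      ∀ x ∈ Icc βlo βhi, x ≠ ψ β →
        |Δ + R (H β) (ψ β) - R (H β) βstar| < |Δ + R (H β) x - R (H β) βstar|)
    -- every fixed point of ψ is a strict crossing of the diagonal
    (hcross : ∀ bhat ∈ Icc βlo βhi, ψ bhat = bhat →
      CrossesFromAbove ψ βlo βhi bhat ∨ CrossesFromBelow ψ βlo βhi bhat)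
    -- if βlo is a fixed point, ψ crosses strictly from above there
    (hlofix : ψ βlo = βlo → CrossesFromAbove ψ βlo βhi βlo) :
    ∃ k : ℕ, ∃ l : Fin (2 * k + 1) → ℝ,
      StrictAnti l ∧
      {β : ℝ | β ∈ Icc βlo βhi ∧ ψ β = β} = Set.range l ∧
      ∀ j : Fin (2 * k + 1),
        (Even (j : ℕ) → CrossesFromAbove ψ βlo βhi (l j)) ∧
        (¬ Even (j : ℕ) → CrossesFromBelow ψ βlo βhi (l j)) := by
  have hIle : βlo ≤ βhi := le_of_lt (lt_trans hls hsh)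
  have hψK : ∀ β ∈ Icc βlo βhi, ψ β ∈ Icc βlo βhi := fun β hβ => (hψ β hβ).1
  have hψmin : ∀ β ∈ Icc βlo βhi, ∀ x ∈ Icc βlo βhi, x ≠ ψ β →
      Phi R H Δ βstar (β, ψ β) < Phi R H Δ βstar (β, x) :=
    fun β hβ x hx hxne => (hψ β hβ).2 x hx hxne
  -- continuity of Phi
  have hHmem : ∀ β ∈ Icc βlo βhi, H β ∈ Icc (0:ℝ) 1 := fun β hβ =>
    ⟨(hHin β (lt_of_lt_of_le hlo hβ.1)).1.le, (hHin β (lt_of_lt_of_le hlo hβ.1)).2.le⟩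
  have hfstc : ContinuousOn (fun p : ℝ × ℝ => H p.1) (Icc βlo βhi ×ˢ Icc βlo βhi) := by
    apply hHcont.comp continuous_fst.continuousOn
    intro p hp
    exact le_trans hlo.le hp.1.1
  have hc1 : ContinuousOn (fun p : ℝ × ℝ => R (H p.1) p.2) (Icc βlo βhi ×ˢ Icc βlo βhi) := by
    apply hRcont.comp (hfstc.prodMk continuous_snd.continuousOn)
    intro p hp
    exact ⟨hHmem p.1 hp.1, le_trans hlo.le hp.2.1⟩
  have hc2 : ContinuousOn (fun p : ℝ × ℝ => R (H p.1) βstar) (Icc βlo βhi ×ˢ Icc βlo βhi) := by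
    apply hRcont.comp (hfstc.prodMk continuousOn_const)
    intro p hp
    exact ⟨hHmem p.1 hp.1, le_of_lt (lt_trans hlo hls)⟩
  have hΦc : ContinuousOn (Phi R H Δ βstar) (Icc βlo βhi ×ˢ Icc βlo βhi) :=
    ((continuousOn_const.add hc1).sub hc2).abs
  have hψc : ContinuousOn ψ (Icc βlo βhi) := argmin_continuousOn hΦc hψK hψmin
  have hψsub : ContinuousOn (fun t => ψ t - t) (Icc βlo βhi) := hψc.sub continuousOn_id
  have prop : ∀ x y : ℝ, βlo ≤ x → x ≤ y → y ≤ βhi → (∀ z, x ≤ z → z ≤ y → ψ z ≠ z) →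
      ((x < ψ x ↔ y < ψ y) ∧ (ψ x < x ↔ ψ y < y)) :=
    fun x y h1 h2 h3 h4 => psi_sign_ext h2 (hψsub.mono (Icc_subset_Icc h1 h3)) h4
  -- ψ βhi < βhi
  have hghi : ψ βhi < βhi := by
    have hhiI : βhi ∈ Icc βlo βhi := ⟨hIle, le_rfl⟩
    rcases lt_or_eq_of_le (hψK βhi hhiI).2 with h | h
    · exact h
    · exfalso
      have hβsI : βstar ∈ Icc βlo βhi := ⟨hls.le, hsh.le⟩
      have hne : βstar ≠ ψ βhi := by rw [h]; exact ne_of_lt hsh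
      have hmin := (hψ βhi hhiI).2 βstar hβsI hne
      rw [h] at hmin
      have hh : H βhi ∈ Ioo (0:ℝ) 1 := hHin βhi (by linarith)
      have hmono : R (H βhi) βstar < R (H βhi) βhi :=
        hRβ (H βhi) ⟨hh.1, hh.2.le⟩ (mem_Ici.mpr (by linarith)) (mem_Ici.mpr (by linarith)) hsh
      rw [add_sub_cancel_right, abs_of_pos hΔ,
        abs_of_pos (show (0:ℝ) < Δ + R (H βhi) βhi - R (H βhi) βstar by linarith)] at hmin
      linarith
  have hglo : βlo ≤ ψ βlo := (hψK βlo ⟨le_rfl, hIle⟩).1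
  -- fixed point set : closed, compact, nonempty, finite
  have hSsub : fixSet ψ βlo βhi ⊆ Icc βlo βhi := fun z hz => hz.1
  have hSclosed : IsClosed (fixSet ψ βlo βhi) := by
    have heq : fixSet ψ βlo βhi = Icc βlo βhi ∩ (fun t => ψ t - t) ⁻¹' {0} := by
      ext t
      simp [fixSet, sub_eq_zero]
    rw [heq]
    exact hψsub.preimage_isClosed_of_isClosed isClosed_Icc isClosed_singleton
  have hScompact : IsCompact (fixSet ψ βlo βhi) :=
    isCompact_Icc.of_isClosed_subset hSclosed hSsub
  have hSne : (fixSet ψ βlo βhi).Nonempty := by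
    rcases eq_or_lt_of_le hglo with h | h
    · exact ⟨βlo, ⟨le_rfl, hIle⟩, h.symm⟩
    · obtain ⟨c, hc, hc0⟩ := intermediate_value_Ioo' hIle hψsub
        (show (0:ℝ) ∈ Ioo (ψ βhi - βhi) (ψ βlo - βlo) from ⟨by linarith, by linarith⟩)
      exact ⟨c, ⟨hc.1.le, hc.2.le⟩, sub_eq_zero.mp hc0⟩
  have hiso : ∀ b ∈ fixSet ψ βlo βhi, ∃ ε > 0, ∀ t ∈ fixSet ψ βlo βhi, |t - b| < ε → t = b := by
    intro b hb
    rcases hcross b hb.1 hb.2 with ⟨ε, hε, hL, hR⟩ | ⟨ε, hε, hL, hR⟩ <;>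
    · refine ⟨ε, hε, fun t ht habs => ?_⟩
      by_contra hne
      have habs' := abs_sub_lt_iff.mp habs
      rcases lt_or_gt_of_ne hne with hlt | hgt
      · have := hL t ⟨⟨by linarith [habs'.2], hlt⟩, ht.1⟩
        rw [ht.2] at this
        exact lt_irrefl t this
      · have := hR t ⟨⟨hgt, by linarith [habs'.1]⟩, ht.1⟩
        rw [ht.2] at this
        exact lt_irrefl t this
  have hSfin : (fixSet ψ βlo βhi).Finite := by
    choose! ε hε hsep using hiso
    obtain ⟨T, hT⟩ := hScompact.elim_finite_subcover
      (fun b : fixSet ψ βlo βhi => Metric.ball (b : ℝ) (ε b))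
      (fun b => Metric.isOpen_ball)
      (fun x hx => mem_iUnion.mpr ⟨⟨x, hx⟩, Metric.mem_ball_self (hε x hx)⟩)
    apply Set.Finite.subset (T.finite_toSet.image (fun b : fixSet ψ βlo βhi => (b : ℝ)))
    intro x hx
    obtain ⟨b, hbT, hxb⟩ := mem_iUnion₂.mp (hT hx)
    have hx_eq : x = (b : ℝ) :=
      hsep (b : ℝ) b.2 x hx (by rw [← Real.dist_eq]; exact Metric.mem_ball.mp hxb)
    exact ⟨b, Finset.mem_coe.mpr hbT, hx_eq.symm⟩
  -- decreasing enumeration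
  obtain ⟨n, l0, hanti, hrange⟩ :
      ∃ n : ℕ, ∃ l0 : Fin n → ℝ, StrictAnti l0 ∧ range l0 = fixSet ψ βlo βhi := by
    refine ⟨hSfin.toFinset.card, fun j => ((hSfin.toFinset.orderIsoOfFin rfl) j.rev : ℝ), ?_, ?_⟩
    · intro i j hij
      exact Subtype.coe_lt_coe.mpr
        ((hSfin.toFinset.orderIsoOfFin rfl).strictMono (Fin.rev_lt_rev.mpr hij))
    · ext x
      simp only [mem_range]
      constructor
      · rintro ⟨j, rfl⟩
        have := ((hSfin.toFinset.orderIsoOfFin rfl) j.rev).2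
        rwa [Set.Finite.mem_toFinset] at this
      · intro hx
        have hx' : x ∈ hSfin.toFinset := hSfin.mem_toFinset.mpr hx
        refine ⟨((hSfin.toFinset.orderIsoOfFin rfl).symm ⟨x, hx'⟩).rev, ?_⟩
        rw [Fin.rev_rev]
        simp
  have hmem : ∀ j : Fin n, l0 j ∈ fixSet ψ βlo βhi := fun j => by
    rw [← hrange]; exact mem_range_self j
  have hSrep : ∀ b ∈ fixSet ψ βlo βhi, ∃ i : Fin n, l0 i = b := fun b hb => by
    rw [← hrange] at hb; exact hb
  have npos : 0 < n := by
    obtain ⟨b0, hb0⟩ := hSne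
    obtain ⟨i0, -⟩ := hSrep b0 hb0
    exact i0.pos
  have hl0le : ∀ i j : Fin n, (i : ℕ) ≤ (j : ℕ) → l0 j ≤ l0 i :=
    fun i j h => hanti.antitone (Fin.le_def.mpr h)
  have hl0hi : l0 ⟨0, npos⟩ < βhi :=
    lt_of_le_of_ne (hmem ⟨0, npos⟩).1.2
      (fun h => absurd (show ψ βhi = βhi by rw [← h]; exact (hmem ⟨0, npos⟩).2)
        (ne_of_lt hghi))
  -- no-fixed-point lemmas
  have hnof_above : ∀ t : ℝ, l0 ⟨0, npos⟩ < t → ∀ z, t ≤ z → z ≤ βhi → ψ z ≠ z := by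
    intro t ht z hz1 hz2 hfix
    have hzS : z ∈ fixSet ψ βlo βhi :=
      ⟨⟨le_trans (hmem ⟨0, npos⟩).1.1 (le_trans ht.le hz1), hz2⟩, hfix⟩
    obtain ⟨i, hi⟩ := hSrep z hzS
    have h := hl0le ⟨0, npos⟩ i (Nat.zero_le _)
    rw [hi] at h
    linarith
  have hnof_between : ∀ (m : ℕ) (hm1 : m < n) (hm2 : m + 1 < n),
      ∀ z, l0 ⟨m + 1, hm2⟩ < z → z < l0 ⟨m, hm1⟩ → ψ z ≠ z := by
    intro m hm1 hm2 z hz1 hz2 hfix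
    have hzS : z ∈ fixSet ψ βlo βhi :=
      ⟨⟨le_trans (hmem ⟨m + 1, hm2⟩).1.1 hz1.le, le_trans hz2.le (hmem ⟨m, hm1⟩).1.2⟩, hfix⟩
    obtain ⟨i, hi⟩ := hSrep z hzS
    rcases le_or_gt (i : ℕ) m with h | h
    · have h2 := hl0le i ⟨m, hm1⟩ h
      rw [hi] at h2
      linarith
    · have h2 := hl0le ⟨m + 1, hm2⟩ i h
      rw [hi] at h2
      linarith
  have hlastlt : n - 1 < n := Nat.sub_lt npos one_pos
  have hnof_below : ∀ z, z < l0 ⟨n - 1, hlastlt⟩ → βlo ≤ z → ψ z ≠ z := by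
    intro z hz1 hz2 hfix
    have hzS : z ∈ fixSet ψ βlo βhi :=
      ⟨⟨hz2, le_trans hz1.le (hmem ⟨n - 1, hlastlt⟩).1.2⟩, hfix⟩
    obtain ⟨i, hi⟩ := hSrep z hzS
    have h2 := hl0le i ⟨n - 1, hlastlt⟩ (Nat.le_pred_of_lt i.isLt)
    rw [hi] at h2
    linarith
  -- point picking to the right
  have pick : ∀ p η ε : ℝ, βlo ≤ p → p < βhi → 0 < η → 0 < ε →
      ∃ t, p < t ∧ t < p + η ∧ t < p + ε ∧ βlo ≤ t ∧ t ≤ βhi := by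
    intro p η ε hp1 hp2 hη hε
    have hmin : 0 < min η ε := lt_min hη hε
    have h1 : p < min (p + min η ε / 2) ((p + βhi) / 2) := lt_min (by linarith) (by linarith)
    refine ⟨min (p + min η ε / 2) ((p + βhi) / 2), h1, ?_, ?_, le_trans hp1 h1.le, ?_⟩
    · have ha := min_le_left η ε
      have h2 := min_le_left (p + min η ε / 2) ((p + βhi) / 2)
      linarith
    · have ha := min_le_right η ε
      have h2 := min_le_left (p + min η ε / 2) ((p + βhi) / 2)
      linarith
    · have h2 := min_le_right (p + min η ε / 2) ((p + βhi) / 2)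
      linarith
  -- crossing type from the right-side sign
  have typeA : ∀ b : ℝ, b ∈ fixSet ψ βlo βhi → b < βhi →
      (∃ η > 0, ∀ t, b < t → t < b + η → t ≤ βhi → ψ t < t) →
      CrossesFromAbove ψ βlo βhi b := by
    rintro b hb hbhi ⟨η, hη, hr⟩
    rcases hcross b hb.1 hb.2 with h | ⟨ε, hε, hL, hR⟩
    · exact h
    · exfalso
      obtain ⟨t, ht1, ht2, ht3, ht4, ht5⟩ := pick b η ε hb.1.1 hbhi hη hε
      have h1 := hR t ⟨⟨ht1, ht3⟩, ht4, ht5⟩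
      have h2 := hr t ht1 ht2 ht5
      linarith
  have typeB : ∀ b : ℝ, b ∈ fixSet ψ βlo βhi → b < βhi →
      (∃ η > 0, ∀ t, b < t → t < b + η → t ≤ βhi → t < ψ t) →
      CrossesFromBelow ψ βlo βhi b := by
    rintro b hb hbhi ⟨η, hη, hr⟩
    rcases hcross b hb.1 hb.2 with ⟨ε, hε, hL, hR⟩ | h
    · exfalso
      obtain ⟨t, ht1, ht2, ht3, ht4, ht5⟩ := pick b η ε hb.1.1 hbhi hη hε
      have h1 := hR t ⟨⟨ht1, ht3⟩, ht4, ht5⟩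
      have h2 := hr t ht1 ht2 ht5
      linarith
    · exact h
  -- the main alternation induction
  have key : ∀ m : ℕ, ∀ hm : m < n,
      (Even m → ∃ η > 0, ∀ t, l0 ⟨m, hm⟩ < t → t < l0 ⟨m, hm⟩ + η → t ≤ βhi → ψ t < t) ∧
      (¬ Even m → ∃ η > 0, ∀ t, l0 ⟨m, hm⟩ < t → t < l0 ⟨m, hm⟩ + η → t ≤ βhi → t < ψ t) := by
    intro m
    induction m with
    | zero =>
      intro hm
      refine ⟨fun _ => ⟨βhi - l0 ⟨0, hm⟩, sub_pos.mpr hl0hi, fun t ht1 ht2 ht3 => ?_⟩,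
        fun h => absurd Even.zero h⟩
      exact ((prop t βhi (le_trans (hmem ⟨0, hm⟩).1.1 ht1.le) ht3 le_rfl
        (hnof_above t ht1)).2).mpr hghi
    | succ m ih =>
      intro hm
      have hm' : m < n := Nat.lt_of_succ_lt hm
      have hlt : l0 ⟨m + 1, hm⟩ < l0 ⟨m, hm'⟩ := hanti (Fin.mk_lt_mk.mpr (Nat.lt_succ_self m))
      have hβlo1 : βlo ≤ l0 ⟨m + 1, hm⟩ := (hmem _).1.1
      have hhi' : l0 ⟨m, hm'⟩ ≤ βhi := (hmem _).1.2
      have hmhi : l0 ⟨m, hm'⟩ < βhi :=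
        lt_of_le_of_lt (hl0le ⟨0, npos⟩ ⟨m, hm'⟩ (Nat.zero_le m)) hl0hi
      by_cases hEm : Even m
      · obtain ⟨η, hη, hr⟩ := (ih hm').1 hEm
        obtain ⟨ε, hε, hL, hR⟩ := typeA (l0 ⟨m, hm'⟩) (hmem _) hmhi ⟨η, hη, hr⟩
        refine ⟨fun h => absurd hEm (Nat.even_add_one.mp h),
          fun _ => ⟨l0 ⟨m, hm'⟩ - l0 ⟨m + 1, hm⟩, sub_pos.mpr hlt, fun t ht1 ht2 ht3 => ?_⟩⟩
        have htlt : t < l0 ⟨m, hm'⟩ := by linarith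
        have hw2 : max t (l0 ⟨m, hm'⟩ - ε / 2) < l0 ⟨m, hm'⟩ := max_lt htlt (by linarith)
        have hw3 : l0 ⟨m, hm'⟩ - ε < max t (l0 ⟨m, hm'⟩ - ε / 2) :=
          lt_of_lt_of_le (by linarith) (le_max_right _ _)
        have hβlot : βlo ≤ t := le_trans hβlo1 ht1.le
        have hwhi : max t (l0 ⟨m, hm'⟩ - ε / 2) ≤ βhi := le_trans hw2.le hhi'
        have hwp := hL (max t (l0 ⟨m, hm'⟩ - ε / 2))
          ⟨⟨hw3, hw2⟩, le_trans hβlot (le_max_left _ _), hwhi⟩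
        have hnf : ∀ z, t ≤ z → z ≤ max t (l0 ⟨m, hm'⟩ - ε / 2) → ψ z ≠ z := fun z hz1 hz2 =>
          hnof_between m hm' hm z (lt_of_lt_of_le ht1 hz1) (lt_of_le_of_lt hz2 hw2)
        exact ((prop t (max t (l0 ⟨m, hm'⟩ - ε / 2)) hβlot (le_max_left _ _) hwhi hnf).1).mpr hwp
      · obtain ⟨η, hη, hr⟩ := (ih hm').2 hEm
        obtain ⟨ε, hε, hL, hR⟩ := typeB (l0 ⟨m, hm'⟩) (hmem _) hmhi ⟨η, hη, hr⟩
        refine ⟨fun _ => ⟨l0 ⟨m, hm'⟩ - l0 ⟨m + 1, hm⟩, sub_pos.mpr hlt, fun t ht1 ht2 ht3 => ?_⟩,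
          fun h => absurd (Nat.even_add_one.mpr hEm) h⟩
        have htlt : t < l0 ⟨m, hm'⟩ := by linarith
        have hw2 : max t (l0 ⟨m, hm'⟩ - ε / 2) < l0 ⟨m, hm'⟩ := max_lt htlt (by linarith)
        have hw3 : l0 ⟨m, hm'⟩ - ε < max t (l0 ⟨m, hm'⟩ - ε / 2) :=
          lt_of_lt_of_le (by linarith) (le_max_right _ _)
        have hβlot : βlo ≤ t := le_trans hβlo1 ht1.le
        have hwhi : max t (l0 ⟨m, hm'⟩ - ε / 2) ≤ βhi := le_trans hw2.le hhi'
        have hwp := hL (max t (l0 ⟨m, hm'⟩ - ε / 2))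
          ⟨⟨hw3, hw2⟩, le_trans hβlot (le_max_left _ _), hwhi⟩
        have hnf : ∀ z, t ≤ z → z ≤ max t (l0 ⟨m, hm'⟩ - ε / 2) → ψ z ≠ z := fun z hz1 hz2 =>
          hnof_between m hm' hm z (lt_of_lt_of_le ht1 hz1) (lt_of_le_of_lt hz2 hw2)
        exact ((prop t (max t (l0 ⟨m, hm'⟩ - ε / 2)) hβlot (le_max_left _ _) hwhi hnf).2).mpr hwp
  -- the last fixed point crosses from above
  have hlasthi : l0 ⟨n - 1, hlastlt⟩ < βhi :=
    lt_of_le_of_lt (hl0le ⟨0, npos⟩ ⟨n - 1, hlastlt⟩ (Nat.zero_le _)) hl0hi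
  have hlastA : CrossesFromAbove ψ βlo βhi (l0 ⟨n - 1, hlastlt⟩) := by
    rcases eq_or_lt_of_le (hmem ⟨n - 1, hlastlt⟩).1.1 with heq | hlt
    · rw [← heq]
      exact hlofix (by rw [heq]; exact (hmem ⟨n - 1, hlastlt⟩).2)
    · rcases hcross (l0 ⟨n - 1, hlastlt⟩) (hmem _).1 (hmem _).2 with h | ⟨ε, hε, hL, hR⟩
      · exact h
      · exfalso
        have ht1 : βlo ≤ max βlo (l0 ⟨n - 1, hlastlt⟩ - ε / 2) := le_max_left _ _
        have ht2 : max βlo (l0 ⟨n - 1, hlastlt⟩ - ε / 2) < l0 ⟨n - 1, hlastlt⟩ :=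
          max_lt hlt (by linarith)
        have ht3 : l0 ⟨n - 1, hlastlt⟩ - ε < max βlo (l0 ⟨n - 1, hlastlt⟩ - ε / 2) :=
          lt_of_lt_of_le (by linarith) (le_max_right _ _)
        have hthi : max βlo (l0 ⟨n - 1, hlastlt⟩ - ε / 2) ≤ βhi :=
          le_trans ht2.le (hmem _).1.2
        have h1 := hL (max βlo (l0 ⟨n - 1, hlastlt⟩ - ε / 2)) ⟨⟨ht3, ht2⟩, ht1, hthi⟩
        have hlofree : ∀ z, βlo ≤ z → z ≤ max βlo (l0 ⟨n - 1, hlastlt⟩ - ε / 2) → ψ z ≠ z :=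
          fun z hz1 hz2 => hnof_below z (lt_of_le_of_lt hz2 ht2) hz1
        have hlopos : βlo < ψ βlo :=
          lt_of_le_of_ne hglo (Ne.symm (hlofree βlo le_rfl ht1))
        have h2 := ((prop βlo (max βlo (l0 ⟨n - 1, hlastlt⟩ - ε / 2)) le_rfl ht1 hthi
          hlofree).1).mp hlopos
        linarith
  have hEvenLast : Even (n - 1) := by
    by_contra hodd
    obtain ⟨η, hη, hr⟩ := (key (n - 1) hlastlt).2 hodd
    obtain ⟨ε, hε, hL, hR⟩ := hlastA
    obtain ⟨t, ht1, ht2, ht3, ht4, ht5⟩ :=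
      pick (l0 ⟨n - 1, hlastlt⟩) η ε (hmem _).1.1 hlasthi hη hε
    have h1 := hR t ⟨⟨ht1, ht3⟩, ht4, ht5⟩
    have h2 := hr t ht1 ht2 ht5
    linarith
  -- crossing type at each index
  have cross_j : ∀ i : Fin n,
      (Even (i : ℕ) → CrossesFromAbove ψ βlo βhi (l0 i)) ∧
      (¬ Even (i : ℕ) → CrossesFromBelow ψ βlo βhi (l0 i)) := by
    intro i
    have hk := key (i : ℕ) i.isLt
    have hihi : l0 i < βhi := lt_of_le_of_lt (hl0le ⟨0, npos⟩ i (Nat.zero_le _)) hl0hi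
    exact ⟨fun he => typeA (l0 i) (hmem i) hihi (hk.1 he),
      fun he => typeB (l0 i) (hmem i) hihi (hk.2 he)⟩
  -- assemble
  obtain ⟨k, hk2⟩ := hEvenLast
  have hkn : n = 2 * k + 1 := by omega
  refine ⟨k, fun j => l0 (Fin.cast hkn.symm j), ?_, ?_, fun j => ?_⟩
  · intro a b hab
    exact hanti (show Fin.cast hkn.symm a < Fin.cast hkn.symm b from hab)
  · show fixSet ψ βlo βhi = range (fun j => l0 (Fin.cast hkn.symm j))
    ext x
    constructor
    · intro hx
      obtain ⟨i, hi⟩ := hSrep x hx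
      refine ⟨Fin.cast hkn i, ?_⟩
      show l0 (Fin.cast hkn.symm (Fin.cast hkn i)) = x
      have hcc : Fin.cast hkn.symm (Fin.cast hkn i) = i := Fin.ext rfl
      rw [hcc]
      exact hi
    · rintro ⟨j, rfl⟩
      exact hmem _
  · have hval : ((Fin.cast hkn.symm j : Fin n) : ℕ) = (j : ℕ) := Fin.coe_cast _ _
    have hc := cross_j (Fin.cast hkn.symm j)
    exact ⟨fun he => hc.1 (by rw [hval]; exact he), fun he => hc.2 (by rw [hval]; exact he)⟩
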